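/- Let S ⊂ ℝ^m be a finite set whose convex hull P has nonempty interior and let c : S → ℝ_{>0}. Then each function m_{S,c,α} (α ∈ S), initially defined on P°, extends to a continuous function on all of P; moreover the extensions satisfy Σ_{α∈S} m_{S,c,α}(x) = 1 and Σ_{α∈S} m_{S,c,α}(x)·α = x for every x ∈ P. -/

import Mathlib

open MeasureTheory Filter Set
open scoped RealInnerProductSpace ENNReal Topology

noncomputable section

/-- `χ_{S,c}(τ) = Σ_{α∈S} c(α) e^{⟨α,τ⟩}`. -/
def chiSc {m : ℕ} (S : Finset (EuclideanSpace ℝ (Fin m)))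
    (c : EuclideanSpace ℝ (Fin m) → ℝ) (τ : EuclideanSpace ℝ (Fin m)) : ℝ :=
  ∑ α ∈ S, c α * Real.exp ⟪α, τ⟫

/-- The moment map `μ_{S,c}(τ) = Σ_{α∈S} (c(α) e^{⟨α,τ⟩} / χ_{S,c}(τ)) · α`. -/
def muSc {m : ℕ} (S : Finset (EuclideanSpace ℝ (Fin m)))
    (c : EuclideanSpace ℝ (Fin m) → ℝ) (τ : EuclideanSpace ℝ (Fin m)) :
    EuclideanSpace ℝ (Fin m) :=
  (chiSc S c τ)⁻¹ • ∑ α ∈ S, (c α * Real.exp ⟪α, τ⟫) • α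

/-- `m_{S,c,α}(x) = c(α) e^{⟨α,τ_{S,c}(x)⟩} / χ_{S,c}(τ_{S,c}(x))`, for a given inverse
`τSc` of the moment map. -/
def mSc {m : ℕ} (S : Finset (EuclideanSpace ℝ (Fin m)))
    (c : EuclideanSpace ℝ (Fin m) → ℝ)
    (τSc : EuclideanSpace ℝ (Fin m) → EuclideanSpace ℝ (Fin m))
    (α x : EuclideanSpace ℝ (Fin m)) : ℝ :=
  c α * Real.exp ⟪α, τSc x⟫ / chiSc S c (τSc x)

namespace MScAux

variable {E : Type*} [NormedAddCommGroup E] [NormedSpace ℝ E]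
variable {ι : Type*} [Fintype ι]

/-- The set of weight vectors representing `x` as a convex combination of the `β i`. -/
def KK (β : ι → E) (x : E) : Set (ι → ℝ) :=
  {w | (∀ i, 0 ≤ w i) ∧ ∑ i, w i = 1 ∧ ∑ i, w i • β i = x}

/-- The entropy-type functional to be maximized. -/
def ff (γ : ι → ℝ) (w : ι → ℝ) : ℝ :=
  ∑ i, (w i * γ i + Real.negMulLog (w i))

lemma ff_continuous (γ : ι → ℝ) : Continuous (ff γ) := by
  refine continuous_finset_sum _ fun i _ => ?_
  exact ((continuous_apply i).mul continuous_const).add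
    (Real.continuous_negMulLog.comp (continuous_apply i))

lemma KK_mem_Icc {β : ι → E} {x : E} {w : ι → ℝ} (hw : w ∈ KK β x) (i : ι) :
    w i ∈ Icc (0 : ℝ) 1 := by
  refine ⟨hw.1 i, ?_⟩
  calc w i ≤ ∑ j, w j := Finset.single_le_sum (f := w) (fun j _ => hw.1 j) (Finset.mem_univ i)
  _ = 1 := hw.2.1

lemma isClosed_KK (β : ι → E) (x : E) : IsClosed (KK β x) := by
  have h1 : IsClosed {w : ι → ℝ | ∀ i, 0 ≤ w i} := by
    have : {w : ι → ℝ | ∀ i, 0 ≤ w i} = ⋂ i, (fun w : ι → ℝ => w i) ⁻¹' Ici 0 := by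
      ext w; simp [Set.mem_iInter]
    rw [this]
    exact isClosed_iInter fun i => isClosed_Ici.preimage (continuous_apply i)
  have h2 : IsClosed {w : ι → ℝ | ∑ i, w i = 1} :=
    isClosed_eq (continuous_finset_sum _ fun i _ => continuous_apply i) continuous_const
  have h3 : IsClosed {w : ι → ℝ | ∑ i, w i • β i = x} :=
    isClosed_eq (continuous_finset_sum _ fun i _ => (continuous_apply i).smul continuous_const)
      continuous_const
  have : KK β x
      = {w : ι → ℝ | ∀ i, 0 ≤ w i} ∩ ({w | ∑ i, w i = 1} ∩ {w | ∑ i, w i • β i = x}) := by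
    ext w; simp [KK, and_assoc]
  rw [this]
  exact h1.inter (h2.inter h3)

omit [Fintype ι] in
lemma isCompact_QQ [Fintype ι] : IsCompact (Set.pi univ fun _ : ι => Icc (0:ℝ) 1) :=
  isCompact_univ_pi fun _ => isCompact_Icc

lemma isCompact_KK (β : ι → E) (x : E) : IsCompact (KK β x) := by
  refine IsCompact.of_isClosed_subset isCompact_QQ (isClosed_KK β x) ?_
  intro w hw
  simp only [Set.mem_pi, Set.mem_univ, forall_true_left]
  intro i
  exact KK_mem_Icc hw i

/-- The elementary inequality behind Gibbs' inequality. -/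
lemma term_le {w p : ℝ} (hw : 0 ≤ w) (hp : 0 < p) :
    w * Real.log p + Real.negMulLog w ≤ p - w := by
  rcases hw.eq_or_lt with h | h
  · rw [← h]
    simpa [Real.negMulLog] using hp.le
  · have h1 : Real.log (p / w) ≤ p / w - 1 := Real.log_le_sub_one_of_pos (div_pos hp h)
    rw [Real.log_div hp.ne' h.ne'] at h1
    have h2 := mul_le_mul_of_nonneg_left h1 h.le
    have h3 : w * (p / w - 1) = p - w := by field_simp
    rw [h3] at h2
    simp only [Real.negMulLog, neg_mul]
    nlinarith

/-- Gibbs' inequality: a fully supported weight vector of the special exponential form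
maximizes `ff γ` over `KK β x`. -/
lemma isMaxOn_ff (β : ι → E) (γ : ι → ℝ) (p : ι → ℝ) (x : E)
    (hp : ∀ i, 0 < p i) (hpK : p ∈ KK β x) (l : ι → ℝ) (r lx : ℝ)
    (hγ : ∀ i, γ i = Real.log (p i) + r + l i)
    (hl : ∀ w ∈ KK β x, ∑ i, w i * l i = lx) :
    IsMaxOn (ff γ) (KK β x) p := by
  have key : ∀ w ∈ KK β x,
      ff γ w = (∑ i, (w i * Real.log (p i) + Real.negMulLog (w i))) + r + lx := by
    intro w hw
    have h : ff γ w = (∑ i, (w i * Real.log (p i) + Real.negMulLog (w i)))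
        + r * (∑ i, w i) + ∑ i, w i * l i := by
      simp only [ff]
      rw [Finset.mul_sum, ← Finset.sum_add_distrib, ← Finset.sum_add_distrib]
      refine Finset.sum_congr rfl fun i _ => ?_
      rw [hγ i]; ring
    rw [h, hw.2.1, hl w hw, mul_one]
  intro w hw
  simp only [Set.mem_setOf_eq]
  rw [key w hw, key p hpK]
  have h0 : ∑ i, (p i * Real.log (p i) + Real.negMulLog (p i)) = 0 := by
    refine Finset.sum_eq_zero fun i _ => ?_
    simp [Real.negMulLog]
  rw [h0]
  have h1 : ∑ i, (w i * Real.log (p i) + Real.negMulLog (w i)) ≤ ∑ i, (p i - w i) :=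
    Finset.sum_le_sum fun i _ => term_le (hw.1 i) (hp i)
  have h2 : ∑ i, (p i - w i) = 0 := by
    rw [Finset.sum_sub_distrib, hpK.2.1, hw.2.1, sub_self]
  linarith

/-- Uniqueness of the maximizer of `ff γ` on `KK β x`, by strict concavity. -/
lemma maxOn_unique (β : ι → E) (γ : ι → ℝ) {x : E} {w w' : ι → ℝ}
    (hw : w ∈ KK β x) (hw' : w' ∈ KK β x)
    (hM : IsMaxOn (ff γ) (KK β x) w) (hM' : IsMaxOn (ff γ) (KK β x) w') : w = w' := by
  by_contra hne
  obtain ⟨i₀, hi₀⟩ := Function.ne_iff.1 hne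
  have huK : (fun i => (w i + w' i) / 2) ∈ KK β x := by
    refine ⟨fun i => div_nonneg (add_nonneg (hw.1 i) (hw'.1 i)) two_pos.le, ?_, ?_⟩
    · rw [← Finset.sum_div, Finset.sum_add_distrib, hw.2.1, hw'.2.1]
      norm_num
    · have hterm : ∀ i : ι, ((w i + w' i) / 2) • β i
          = (2⁻¹ : ℝ) • (w i • β i) + (2⁻¹ : ℝ) • (w' i • β i) := by
        intro i
        rw [smul_smul, smul_smul, ← add_smul]
        congr 1
        ring
      rw [Finset.sum_congr rfl fun i _ => hterm i, Finset.sum_add_distrib,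
        ← Finset.smul_sum, ← Finset.smul_sum, hw.2.2, hw'.2.2, ← add_smul]
      norm_num
  have heq : ff γ w' = ff γ w := le_antisymm (hM hw') (hM' hw)
  have hlt : ff γ w < ff γ (fun i => (w i + w' i) / 2) := by
    have h3 : ∑ i, ((w i * γ i + Real.negMulLog (w i))
          + (w' i * γ i + Real.negMulLog (w' i))) / 2
        < ∑ i, (((w i + w' i) / 2) * γ i + Real.negMulLog ((w i + w' i) / 2)) := by
      refine Finset.sum_lt_sum (fun i _ => ?_) ⟨i₀, Finset.mem_univ i₀, ?_⟩
      · have hcc := Real.concaveOn_negMulLog.2 (mem_Ici.2 (hw.1 i)) (mem_Ici.2 (hw'.1 i))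
          (by norm_num : (0:ℝ) ≤ 1/2) (by norm_num : (0:ℝ) ≤ 1/2) (by norm_num)
        simp only [smul_eq_mul] at hcc
        have harg : (1/2 : ℝ) * w i + (1/2 : ℝ) * w' i = (w i + w' i) / 2 := by ring
        rw [harg] at hcc
        have hlin : ((w i + w' i) / 2) * γ i = (w i * γ i + w' i * γ i) / 2 := by ring
        rw [hlin]
        linarith
      · have hcc := Real.strictConcaveOn_negMulLog.2 (mem_Ici.2 (hw.1 i₀))
          (mem_Ici.2 (hw'.1 i₀)) hi₀ (by norm_num : (0:ℝ) < 1/2) (by norm_num : (0:ℝ) < 1/2)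
          (by norm_num)
        simp only [smul_eq_mul] at hcc
        have harg : (1/2 : ℝ) * w i₀ + (1/2 : ℝ) * w' i₀ = (w i₀ + w' i₀) / 2 := by ring
        rw [harg] at hcc
        have hlin : ((w i₀ + w' i₀) / 2) * γ i₀ = (w i₀ * γ i₀ + w' i₀ * γ i₀) / 2 := by ring
        rw [hlin]
        linarith
    have h4 : ∑ i, ((w i * γ i + Real.negMulLog (w i))
          + (w' i * γ i + Real.negMulLog (w' i))) / 2 = (ff γ w + ff γ w') / 2 := by
      rw [← Finset.sum_div, Finset.sum_add_distrib]
      rfl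
    have h5 : ff γ (fun i => (w i + w' i) / 2)
        = ∑ i, (((w i + w' i) / 2) * γ i + Real.negMulLog ((w i + w' i) / 2)) := rfl
    rw [h5]
    calc ff γ w = (ff γ w + ff γ w') / 2 := by rw [heq]; ring
    _ = _ := h4.symm
    _ < _ := h3
  exact absurd (hM huK) (not_le.2 hlt)

/-- Continuity of the maximizing selection on `P`. -/
theorem continuousOn_argmax (β : ι → E) (γ : ι → ℝ) (P : Set E) (g : E → ι → ℝ)
    (hgQ : ∀ x i, g x i ∈ Icc (0:ℝ) 1)
    (hgK : ∀ x ∈ P, g x ∈ KK β x)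
    (hgM : ∀ x ∈ P, IsMaxOn (ff γ) (KK β x) (g x)) :
    ContinuousOn g P := by
  intro x hx
  have key : Tendsto g (𝓝[P] x) (𝓝 (g x)) := by
    apply tendsto_of_subseq_tendsto
    intro u hu
    have huQ : ∀ n, g (u n) ∈ Set.pi univ fun _ : ι => Icc (0:ℝ) 1 := by
      intro n
      simp only [Set.mem_pi, Set.mem_univ, forall_true_left]
      intro i
      exact hgQ (u n) i
    obtain ⟨w', hw'Q, φ, hφ, hconv⟩ := isCompact_QQ.tendsto_subseq huQ
    refine ⟨φ, ?_⟩
    set y : ℕ → E := fun k => u (φ k) with hy_def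
    have hy : Tendsto y atTop (𝓝[P] x) := hu.comp hφ.tendsto_atTop
    have hyP : ∀ᶠ k in atTop, y k ∈ P := hy.eventually eventually_mem_nhdsWithin
    have hyx : Tendsto y atTop (𝓝 x) := hy.mono_right nhdsWithin_le_nhds
    have hgy : Tendsto (fun k => g (y k)) atTop (𝓝 w') := hconv
    have hgyi : ∀ i, Tendsto (fun k => g (y k) i) atTop (𝓝 (w' i)) :=
      fun i => ((continuous_apply i).tendsto w').comp hgy
    have hw'K : w' ∈ KK β x := by
      refine ⟨?_, ?_, ?_⟩
      · intro i
        exact ge_of_tendsto (hgyi i) (Eventually.of_forall fun k => (hgQ (y k) i).1)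
      · have hs1 : Tendsto (fun k => ∑ i, g (y k) i) atTop (𝓝 (∑ i, w' i)) :=
          tendsto_finset_sum _ fun i _ => hgyi i
        have hs2 : (fun k => ∑ i, g (y k) i) =ᶠ[atTop] fun _ => (1:ℝ) :=
          hyP.mono fun k hk => (hgK _ hk).2.1
        exact tendsto_nhds_unique (Tendsto.congr' hs2 hs1) tendsto_const_nhds
      · have hc1 : Tendsto (fun k => ∑ i, g (y k) i • β i) atTop (𝓝 (∑ i, w' i • β i)) :=
          tendsto_finset_sum _ fun i _ => (hgyi i).smul tendsto_const_nhds
        have hc2 : (fun k => ∑ i, g (y k) i • β i) =ᶠ[atTop] y :=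
          hyP.mono fun k hk => (hgK _ hk).2.2
        exact tendsto_nhds_unique (Tendsto.congr' hc2 hc1) hyx
    have hw'M : IsMaxOn (ff γ) (KK β x) w' := by
      intro w hw
      simp only [Set.mem_setOf_eq]
      have hstep : ∀ t : ℝ, t ∈ Ioo (0:ℝ) 1 →
          ff γ (fun i => (1 - t) * w i + t * w' i) ≤ ff γ w' := by
        intro t ht
        set v : ℕ → ι → ℝ := fun k i => (1 - t) * w i + g (y k) i - (1 - t) * w' i with hv
        have hvt : ∀ i, Tendsto (fun k => v k i) atTop (𝓝 ((1 - t) * w i + t * w' i)) := by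
          intro i
          have h := (tendsto_const_nhds (x := (1 - t) * w i)).add (hgyi i)
          have h2 := h.sub (tendsto_const_nhds (x := (1 - t) * w' i))
          have harg : (1 - t) * w i + w' i - (1 - t) * w' i = (1 - t) * w i + t * w' i := by
            ring
          rw [harg] at h2
          exact h2
        have hvnn : ∀ᶠ k in atTop, ∀ i, 0 ≤ v k i := by
          rw [eventually_all]
          intro i
          have hLnn : (0:ℝ) ≤ (1 - t) * w i + t * w' i :=
            add_nonneg (mul_nonneg (by linarith [ht.2]) (hw.1 i))
              (mul_nonneg ht.1.le (hw'K.1 i))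
          rcases hLnn.eq_or_lt with hL | hL
          · have hwi : w i = 0 := by
              have h1 := hw.1 i
              have h2 := hw'K.1 i
              refine le_antisymm ?_ h1
              nlinarith [ht.1, ht.2]
            have hw'i : w' i = 0 := by
              have h1 := hw.1 i
              have h2 := hw'K.1 i
              refine le_antisymm ?_ h2
              nlinarith [ht.1, ht.2]
            refine Eventually.of_forall fun k => ?_
            have : v k i = g (y k) i := by
              simp [hv, hwi, hw'i]
            rw [this]
            exact (hgQ (y k) i).1
          · exact ((hvt i).eventually (eventually_gt_nhds hL)).mono fun k hk => hk.le
        have hvK : ∀ᶠ k in atTop, v k ∈ KK β (y k) := by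
          filter_upwards [hvnn, hyP] with k h1 h2
          refine ⟨h1, ?_, ?_⟩
          · have hgk := (hgK _ h2).2.1
            simp only [hv]
            rw [Finset.sum_sub_distrib, Finset.sum_add_distrib, ← Finset.mul_sum,
              ← Finset.mul_sum, hw.2.1, hgk, hw'K.2.1]
            ring
          · have hgk := (hgK _ h2).2.2
            simp only [hv]
            have hterm : ∀ i : ι, ((1 - t) * w i + g (y k) i - (1 - t) * w' i) • β i
                = (1 - t) • (w i • β i) + g (y k) i • β i - (1 - t) • (w' i • β i) := by
              intro i
              rw [sub_smul, add_smul, smul_smul, smul_smul]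
            rw [Finset.sum_congr rfl fun i _ => hterm i, Finset.sum_sub_distrib,
              Finset.sum_add_distrib, ← Finset.smul_sum, ← Finset.smul_sum,
              hw.2.2, hgk, hw'K.2.2]
            abel
        have hle : ∀ᶠ k in atTop, ff γ (v k) ≤ ff γ (g (y k)) := by
          filter_upwards [hvK, hyP] with k h1 h2
          exact hgM _ h2 h1
        refine le_of_tendsto_of_tendsto ?_ ?_ hle
        · exact ((ff_continuous γ).tendsto _).comp (tendsto_pi_nhds.2 hvt)
        · exact ((ff_continuous γ).tendsto _).comp hgy
      have hlim : Tendsto (fun t : ℝ => ff γ (fun i => (1 - t) * w i + t * w' i))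
          (𝓝[>] (0:ℝ)) (𝓝 (ff γ w)) := by
        have hcont2 : Continuous fun t : ℝ => ff γ (fun i => (1 - t) * w i + t * w' i) := by
          refine (ff_continuous γ).comp (continuous_pi fun i => ?_)
          fun_prop
        have h0 : (fun i => (1 - (0:ℝ)) * w i + 0 * w' i) = w := by
          funext i; ring
        have ht := hcont2.tendsto 0
        rw [h0] at ht
        exact ht.mono_left nhdsWithin_le_nhds
      have hev : ∀ᶠ t in 𝓝[>] (0:ℝ),
          ff γ (fun i => (1 - t) * w i + t * w' i) ≤ ff γ w' :=
        Filter.eventually_of_mem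
          (Ioo_mem_nhdsGT_of_mem (⟨le_refl 0, one_pos⟩ : (0:ℝ) ∈ Ico (0:ℝ) 1)) hstep
      exact le_of_tendsto hlim hev
    have hfin : w' = g x := maxOn_unique β γ hw'K (hgK x hx) hw'M (hgM x hx)
    rw [← hfin]
    exact hconv
  exact key

end MScAux

open MScAux

/-- The functions `m_{S,c,α}` extend continuously from `P°` to `P`, and the
extensions satisfy `Σ_α m_{S,c,α}(x) = 1` and `Σ_α m_{S,c,α}(x)·α = x` on all of `P`. -/
theorem mSc_extends_continuously
    {m : ℕ} (S : Finset (EuclideanSpace ℝ (Fin m)))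
    (c : EuclideanSpace ℝ (Fin m) → ℝ) (hc : ∀ α ∈ S, 0 < c α)
    (P : Set (EuclideanSpace ℝ (Fin m)))
    (hP : P = convexHull ℝ (S : Set (EuclideanSpace ℝ (Fin m))))
    (hPo : (interior P).Nonempty)
    (τSc : EuclideanSpace ℝ (Fin m) → EuclideanSpace ℝ (Fin m))
    (hτ₁ : ∀ τ, τSc (muSc S c τ) = τ)
    (hτ₂ : ∀ x ∈ interior P, muSc S c (τSc x) = x) :
    ∃ M : EuclideanSpace ℝ (Fin m) → EuclideanSpace ℝ (Fin m) → ℝ,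
      (∀ α ∈ S, ContinuousOn (M α) P) ∧
      (∀ α ∈ S, ∀ x ∈ interior P, M α x = mSc S c τSc α x) ∧
      (∀ x ∈ P, ∑ α ∈ S, M α x = 1) ∧
      (∀ x ∈ P, ∑ α ∈ S, M α x • α = x) := by
  classical
  let ι := {α : EuclideanSpace ℝ (Fin m) // α ∈ S}
  let β : ι → EuclideanSpace ℝ (Fin m) := fun i => (i : EuclideanSpace ℝ (Fin m))
  let γ : ι → ℝ := fun i => Real.log (c (i : EuclideanSpace ℝ (Fin m)))
  -- nonemptiness of the fibers
  have hKne : ∀ x ∈ P, (KK β x).Nonempty := by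
    intro x hx
    rw [hP] at hx
    obtain ⟨w, hw0, hw1, hwx⟩ := Finset.mem_convexHull'.1 hx
    refine ⟨fun i => w (i : EuclideanSpace ℝ (Fin m)), fun i => hw0 _ i.2, ?_, ?_⟩
    · exact (Finset.sum_coe_sort S w).trans hw1
    · exact (Finset.sum_coe_sort S (fun α => w α • α)).trans hwx
  -- existence of maximizers
  have hex : ∀ x : EuclideanSpace ℝ (Fin m), ∃ v : ι → ℝ, (∀ i, v i ∈ Icc (0:ℝ) 1) ∧
      (x ∈ P → v ∈ KK β x ∧ IsMaxOn (ff γ) (KK β x) v) := by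
    intro x
    by_cases hx : x ∈ P
    · obtain ⟨v, hvK, hvM⟩ :=
        (isCompact_KK β x).exists_isMaxOn (hKne x hx) (ff_continuous γ).continuousOn
      exact ⟨v, fun i => KK_mem_Icc hvK i, fun _ => ⟨hvK, hvM⟩⟩
    · refine ⟨fun _ => 0, fun i => ?_, fun h => absurd h hx⟩
      simp
  choose g hgQ hgP using hex
  have hgcont : ContinuousOn g P :=
    continuousOn_argmax β γ P g hgQ (fun x hx => (hgP x hx).1) (fun x hx => (hgP x hx).2)
  set M : EuclideanSpace ℝ (Fin m) → EuclideanSpace ℝ (Fin m) → ℝ :=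
    fun α x => if h : α ∈ S then g x ⟨α, h⟩ else 0 with hM_def
  have hM : ∀ (x : EuclideanSpace ℝ (Fin m)) (i : ι),
      M (i : EuclideanSpace ℝ (Fin m)) x = g x i := by
    intro x i
    simp only [hM_def, dif_pos i.2]
    rfl
  refine ⟨M, ?_, ?_, ?_, ?_⟩
  · -- continuity
    intro α hα
    have h1 : ContinuousOn (fun x => g x ⟨α, hα⟩) P :=
      (continuous_apply (⟨α, hα⟩ : ι)).comp_continuousOn hgcont
    have h2 : M α = fun x => g x ⟨α, hα⟩ := by
      funext x
      simp only [hM_def, dif_pos hα]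
    rw [h2]
    exact h1
  · -- identification on the interior
    intro α hα x hx
    have hxP : x ∈ P := interior_subset hx
    have hS : S.Nonempty := by
      have : (convexHull ℝ (S : Set (EuclideanSpace ℝ (Fin m)))).Nonempty := ⟨x, hP ▸ hxP⟩
      rw [convexHull_nonempty_iff] at this
      exact Finset.coe_nonempty.1 this
    have hχ : 0 < chiSc S c (τSc x) := by
      refine Finset.sum_pos (fun a ha => mul_pos (hc a ha) (Real.exp_pos _)) hS
    set p : ι → ℝ := fun i => c (i : EuclideanSpace ℝ (Fin m)) * Real.exp ⟪(i : EuclideanSpace ℝ (Fin m)), τSc x⟫ / chiSc S c (τSc x)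
      with hp_def
    have hp : ∀ i, 0 < p i :=
      fun i => div_pos (mul_pos (hc _ i.2) (Real.exp_pos _)) hχ
    have hps : ∑ i, p i = 1 := by
      have h1 : ∑ i : ι, p i = ∑ α ∈ S, c α * Real.exp ⟪α, τSc x⟫ / chiSc S c (τSc x) :=
        Finset.sum_coe_sort S (fun α => c α * Real.exp ⟪α, τSc x⟫ / chiSc S c (τSc x))
      rw [h1, ← Finset.sum_div]
      show chiSc S c (τSc x) / chiSc S c (τSc x) = 1
      exact div_self hχ.ne'
    have hpx : ∑ i, p i • β i = x := by
      have h1 : ∑ i : ι, p i • β i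
          = ∑ α ∈ S, (c α * Real.exp ⟪α, τSc x⟫ / chiSc S c (τSc x)) • α :=
        Finset.sum_coe_sort S (fun α => (c α * Real.exp ⟪α, τSc x⟫ / chiSc S c (τSc x)) • α)
      rw [h1]
      have hterm : ∀ a ∈ S, (c a * Real.exp ⟪a, τSc x⟫ / chiSc S c (τSc x)) • a
          = (chiSc S c (τSc x))⁻¹ • ((c a * Real.exp ⟪a, τSc x⟫) • a) := by
        intro a _
        rw [smul_smul, div_eq_inv_mul]
      rw [Finset.sum_congr rfl hterm, ← Finset.smul_sum]
      show muSc S c (τSc x) = x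
      exact hτ₂ x hx
    have hpK : p ∈ KK β x := ⟨fun i => (hp i).le, hps, hpx⟩
    have hγrel : ∀ i : ι, γ i = Real.log (p i) + Real.log (chiSc S c (τSc x))
        + (-⟪(i : EuclideanSpace ℝ (Fin m)), τSc x⟫) := by
      intro i
      have hci : (0:ℝ) < c (i : EuclideanSpace ℝ (Fin m)) := hc _ i.2
      have : Real.log (p i) = Real.log (c (i : EuclideanSpace ℝ (Fin m))) + ⟪(i : EuclideanSpace ℝ (Fin m)), τSc x⟫
          - Real.log (chiSc S c (τSc x)) := by
        simp only [hp_def]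
        rw [Real.log_div (mul_pos hci (Real.exp_pos _)).ne' hχ.ne',
          Real.log_mul hci.ne' (Real.exp_pos _).ne', Real.log_exp]
      rw [this]
      ring
    have hl : ∀ w ∈ KK β x, ∑ i, w i * (-⟪(i : EuclideanSpace ℝ (Fin m)), τSc x⟫) = -⟪x, τSc x⟫ := by
      intro w hw
      have h := hw.2.2
      have hxi : ⟪x, τSc x⟫ = ∑ i, w i * ⟪(i : EuclideanSpace ℝ (Fin m)), τSc x⟫ := by
        rw [← h, sum_inner]
        exact Finset.sum_congr rfl fun i _ => real_inner_smul_left _ _ _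
      rw [hxi, ← Finset.sum_neg_distrib]
      exact Finset.sum_congr rfl fun i _ => by ring
    have hpM : IsMaxOn (ff γ) (KK β x) p :=
      isMaxOn_ff β γ p x hp hpK (fun i => -⟪(i : EuclideanSpace ℝ (Fin m)), τSc x⟫)
        (Real.log (chiSc S c (τSc x))) (-⟪x, τSc x⟫) hγrel hl
    have hgx : g x = p :=
      maxOn_unique β γ (hgP x hxP).1 hpK (hgP x hxP).2 hpM
    have hMx : M α x = g x ⟨α, hα⟩ := by
      simp only [hM_def, dif_pos hα]
    rw [hMx, hgx]
    simp only [hp_def]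
    rfl
  · -- partition of unity
    intro x hx
    have h := (hgP x hx).1.2.1
    calc ∑ α ∈ S, M α x = ∑ i : ι, M (i : EuclideanSpace ℝ (Fin m)) x := (Finset.sum_coe_sort S fun α => M α x).symm
    _ = ∑ i : ι, g x i := Finset.sum_congr rfl fun i _ => hM x i
    _ = 1 := h
  · -- barycentric property
    intro x hx
    have h := (hgP x hx).1.2.2
    calc ∑ α ∈ S, M α x • α = ∑ i : ι, M (i : EuclideanSpace ℝ (Fin m)) x • (i : EuclideanSpace ℝ (Fin m)) :=
        (Finset.sum_coe_sort S fun α => M α x • α).symm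
    _ = ∑ i : ι, g x i • β i := Finset.sum_congr rfl fun i _ => by rw [hM x i]
    _ = x := h

end
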